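/- Let f = 1/t + r_1 + f_1 t + f_2 t² + ⋯ be a formal Laurent series over ℂ satisfying the Riccati equation f′(t) = −f(t)² + 2r_1·f(t) + c for some c ∈ ℂ, where f′ denotes the termwise derivative. Set d = c + r_1². If d ≠ 0, then t·f(t) = D_{s,r_1}(t) for any square root s ∈ ℂ of d; if d = 0, then f(t) = 1/t + r_1, i.e. t·f(t) = 1 + r_1 t. -/

import Mathlib

noncomputable section

namespace RigidGenus

variable {R : Type*} [Field R]

/-- Termwise substitution `t ↦ w·t` on Laurent series: the coefficient of `t^k`
is multiplied by `w^k`. -/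
def zscale (w : R) (f : LaurentSeries R) : LaurentSeries R where
  coeff k := w ^ k * f.coeff k
  isPWO_support' := f.isPWO_support'.mono (fun k hk => by
    simp only [Function.mem_support, ne_eq] at hk ⊢
    exact fun h => hk (by rw [h, mul_zero]))

/-- Termwise derivative of a Laurent series: `(∑ f_k t^k)' = ∑ k f_k t^(k-1)`. -/
def lderiv (f : LaurentSeries R) : LaurentSeries R where
  coeff k := ((k + 1 : ℤ) : R) * f.coeff (k + 1)
  isPWO_support' := by
    have himg : ((fun k : ℤ => k - 1) '' (Function.support f.coeff)).IsPWO :=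
      f.isPWO_support'.image_of_monotone (fun a b h => sub_le_sub_right h 1)
    refine himg.mono (fun k hk => ?_)
    simp only [Function.mem_support, ne_eq] at hk
    exact ⟨k + 1, fun h => hk (by rw [h, mul_zero]), by ring⟩

/-- `F_H = H(t)/t`, as a formal Laurent series. -/
def FH (H : PowerSeries R) : LaurentSeries R :=
  HahnSeries.single (-1 : ℤ) (1 : R) * HahnSeries.ofPowerSeries ℤ R H

/-- `S_H(w_0,…,w_n;t) = ∑_i ∏_{j ≠ i} F_H((w_j - w_i) t)`. -/
def SH (H : PowerSeries R) {n : ℕ} (w : Fin (n + 1) → ℤ) : LaurentSeries R :=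
  ∑ i : Fin (n + 1), ∏ j ∈ Finset.univ.erase i, zscale ((w j - w i : ℤ) : R) (FH H)

/-- `H` is `n`-algebraically rigid: for all `1 ≤ m ≤ n` and pairwise distinct
integers `w_0, …, w_m`, the Laurent series `S_H(w_0,…,w_m;t)` is constant. -/
def AlgRigid (H : PowerSeries R) (n : ℕ) : Prop :=
  ∀ m : ℕ, 1 ≤ m → m ≤ n → ∀ w : Fin (m + 1) → ℤ, Function.Injective w →
    ∀ k : ℤ, k ≠ 0 → (SH H w).coeff k = 0

/-- The formal exponential series `exp (a t)`. -/
def expS (a : R) : PowerSeries R := PowerSeries.mk fun n => a ^ n / n.factorial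

/-- The formal sine series `sin (a t)`. -/
def sinS (a : R) : PowerSeries R :=
  PowerSeries.mk fun n => if n % 2 = 1 then (-1 : R) ^ (n / 2) * a ^ n / n.factorial else 0

/-- The formal cosine series `cos (a t)`. -/
def cosS (a : R) : PowerSeries R :=
  PowerSeries.mk fun n => if n % 2 = 0 then (-1 : R) ^ (n / 2) * a ^ n / n.factorial else 0

/-- `H = D_{a,b}`, the generalized Todd series `t(a·coth(at)+b)`: for `a ≠ 0` it is
characterized by `D_{a,b}(t)·(e^{at} - e^{-at}) = t·(a(e^{at}+e^{-at}) + b(e^{at}-e^{-at}))`,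
and `D_{0,b}(t) = 1 + bt`. -/
def IsDab (a b : R) (H : PowerSeries R) : Prop :=
  (a ≠ 0 ∧ H * (expS a - expS (-a)) =
      PowerSeries.X * (PowerSeries.C (R := R) a * (expS a + expS (-a)) +
        PowerSeries.C (R := R) b * (expS a - expS (-a)))) ∨
  (a = 0 ∧ H = 1 + PowerSeries.C (R := R) b * PowerSeries.X)

/-- `H = G_{a,b}`, the series `t(a·cot(at)+b)`: for `a ≠ 0` it is characterized by
`G_{a,b}(t)·sin(at) = t·(a·cos(at) + b·sin(at))`, and `G_{0,b}(t) = 1 + bt`. -/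
def IsGab (a b : R) (H : PowerSeries R) : Prop :=
  (a ≠ 0 ∧ H * sinS a =
      PowerSeries.X * (PowerSeries.C (R := R) a * cosS a + PowerSeries.C (R := R) b * sinS a)) ∨
  (a = 0 ∧ H = 1 + PowerSeries.C (R := R) b * PowerSeries.X)

open PowerSeries

private lemma dmul (a b : ℂ⟦X⟧) :
    d⁄dX ℂ (a * b) = a * d⁄dX ℂ b + b * d⁄dX ℂ a := by
  simpa [smul_eq_mul] using Derivation.leibniz (d⁄dX ℂ) a b

private lemma derivative_expS (a : ℂ) : d⁄dX ℂ (expS a) = C a * expS a := by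
  ext n
  rw [coeff_derivative, coeff_C_mul]
  simp only [expS, coeff_mk]
  rw [Nat.factorial_succ]
  have h1 : ((n : ℂ) + 1) ≠ 0 := Nat.cast_add_one_ne_zero n
  have h2 : ((n.factorial : ℕ) : ℂ) ≠ 0 := Nat.cast_ne_zero.2 n.factorial_ne_zero
  push_cast
  field_simp
  ring

private lemma expS_coeff_zero (a : ℂ) : coeff 0 (expS a) = 1 := by simp [expS]

private lemma expS_coeff_one (a : ℂ) : coeff 1 (expS a) = a := by simp [expS]

private lemma coeff_X_mul_derivative (g : ℂ⟦X⟧) (n : ℕ) :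
    coeff n (X * d⁄dX ℂ g) = n * coeff n g := by
  cases n with
  | zero => simp [coeff_zero_eq_constantCoeff, map_mul]
  | succ m =>
    rw [coeff_succ_X_mul, coeff_derivative]
    push_cast
    ring

private lemma riccati_unique (r₁ c : ℂ) (g h : ℂ⟦X⟧)
    (hg0 : coeff 0 g = 1) (hh0 : coeff 0 h = 1)
    (hg : X * d⁄dX ℂ g - g = C (2 * r₁) * X * g + C c * X ^ 2 - g ^ 2)
    (hh : X * d⁄dX ℂ h - h = C (2 * r₁) * X * h + C c * X ^ 2 - h ^ 2) :
    g = h := by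
  have hsub : d⁄dX ℂ (g - h) = d⁄dX ℂ g - d⁄dX ℂ h := map_sub _ _ _
  have key : X * d⁄dX ℂ (g - h) - (g - h)
      = -((g - h) * (g + h)) + C (2 * r₁) * X * (g - h) := by
    rw [hsub]; linear_combination hg - hh
  have hz : ∀ n : ℕ, coeff n (g - h) = 0 := by
    intro n
    induction n using Nat.strong_induction_on with
    | _ n ih =>
      have H := congrArg (coeff n) key
      rw [map_sub, map_add, map_neg, coeff_X_mul_derivative] at H
      have h20 : coeff 0 (g + h) = 2 := by rw [map_add, hg0, hh0]; norm_num
      have hm : coeff n ((g - h) * (g + h)) = 2 * coeff n (g - h) := by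
        rw [coeff_mul, Finset.sum_eq_single (n, 0)]
        · rw [h20]; ring
        · rintro ⟨i, j⟩ hb hbne
          rw [Finset.HasAntidiagonal.mem_antidiagonal] at hb
          have hi : i < n := by
            rcases Nat.lt_or_ge i n with h' | h'
            · exact h'
            · exact absurd (by simp only [Prod.mk.injEq]; omega) hbne
          rw [ih i hi, zero_mul]
        · intro hnot
          exact absurd (Finset.HasAntidiagonal.mem_antidiagonal.2 (by omega)) hnot
      have hxp : coeff n (X * (g - h)) = 0 := by
        cases n with
        | zero => simp [coeff_zero_eq_constantCoeff, map_mul]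
        | succ m => rw [coeff_succ_X_mul]; exact ih m (Nat.lt_succ_self m)
      rw [hm, mul_assoc, coeff_C_mul, hxp, mul_zero] at H
      have hkey : ((n : ℂ) + 1) * coeff n (g - h) = 0 := by linear_combination H
      exact (mul_eq_zero.mp hkey).resolve_left (Nat.cast_add_one_ne_zero n)
  have : g - h = 0 := PowerSeries.ext fun n => (hz n).trans (map_zero _).symm
  exact sub_eq_zero.mp this


private lemma isDab_riccati (s r₁ : ℂ) (hs : s ≠ 0) (D : ℂ⟦X⟧)
    (hD : D * (expS s - expS (-s)) =
      X * (C s * (expS s + expS (-s)) + C r₁ * (expS s - expS (-s)))) :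
    coeff 0 D = 1 ∧
    X * d⁄dX ℂ D - D = C (2 * r₁) * X * D + C (s ^ 2 - r₁ ^ 2) * X ^ 2 - D ^ 2 := by
  set u : ℂ⟦X⟧ := expS s - expS (-s) with hu
  set v : ℂ⟦X⟧ := expS s + expS (-s) with hv
  have hu' : d⁄dX ℂ u = C s * v := by
    rw [hu, hv, map_sub, derivative_expS, derivative_expS, map_neg]; ring
  have hv' : d⁄dX ℂ v = C s * u := by
    rw [hu, hv, map_add, derivative_expS, derivative_expS, map_neg]; ring
  have h2 := congrArg (d⁄dX ℂ) hD
  rw [dmul, dmul, map_add, dmul, dmul, derivative_C, derivative_C, derivative_X,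
    hu', hv'] at h2
  have hu1 : coeff 1 u = 2 * s := by
    rw [hu, map_sub, expS_coeff_one, expS_coeff_one]; ring
  have hu0 : coeff 0 u = 0 := by
    rw [hu, map_sub, expS_coeff_zero, expS_coeff_zero]; ring
  have hv0 : coeff 0 v = 2 := by
    rw [hv, map_add, expS_coeff_zero, expS_coeff_zero]; ring
  have hu_ne : u ≠ 0 := by
    intro h
    rw [h, map_zero] at hu1
    exact hs (by linear_combination -hu1/2)
  constructor
  · have hc1 := congrArg (coeff 1) hD
    rw [coeff_succ_X_mul, map_add, coeff_C_mul, coeff_C_mul, hu0, hv0] at hc1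
    rw [coeff_mul] at hc1
    have hanti : (Finset.HasAntidiagonal.antidiagonal 1 : Finset (ℕ × ℕ)) = {(0, 1), (1, 0)} := by decide
    rw [hanti, Finset.sum_insert (by decide), Finset.sum_singleton] at hc1
    have : (coeff 0 D - 1) * (2 * s) = 0 := by
      rw [hu0, hu1] at hc1; linear_combination hc1
    rcases mul_eq_zero.mp this with h | h
    · linear_combination h
    · exact absurd (by linear_combination h / 2) hs
  · have hC : C (s ^ 2 - r₁ ^ 2) = C s * C s - C r₁ * C r₁ := by
      rw [map_sub, map_pow, map_pow]; ring
    have hC2 : C (2 * r₁) = 2 * C r₁ := by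
      rw [map_mul, map_ofNat]
    have hmain : (X * d⁄dX ℂ D - D + D ^ 2 - C (2 * r₁) * X * D
        - C (s ^ 2 - r₁ ^ 2) * X ^ 2) * u ^ 2 = 0 := by
      rw [hC, hC2]
      linear_combination (X * u) * h2
        + (D * u + X * (C s * v + C r₁ * u) - u - X * (C s) * v
            - 2 * (C r₁) * X * u) * hD
    have hQ : X * d⁄dX ℂ D - D + D ^ 2 - C (2 * r₁) * X * D
        - C (s ^ 2 - r₁ ^ 2) * X ^ 2 = 0 :=
      (mul_eq_zero.mp hmain).resolve_right (pow_ne_zero 2 hu_ne)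
    linear_combination hQ

private lemma ofPS_coeff_neg (x : ℂ⟦X⟧) (k : ℤ) (hk : k < 0) :
    ((HahnSeries.ofPowerSeries ℤ ℂ) x).coeff k = 0 := by
  rw [HahnSeries.ofPowerSeries_apply]
  apply HahnSeries.embDomain_notin_range
  rintro ⟨n, hn⟩
  have h2 : (n : ℤ) = k := hn
  omega

private lemma ofPS_coeff_nat (x : ℂ⟦X⟧) (n : ℕ) :
    ((HahnSeries.ofPowerSeries ℤ ℂ) x).coeff (n : ℤ) = coeff n x :=
  HahnSeries.ofPowerSeries_apply_coeff x n

private lemma coeff_X_mul_ofPS (g : ℂ⟦X⟧) (n : ℕ) :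
    coeff n (X * g) = ((HahnSeries.ofPowerSeries ℤ ℂ) g).coeff ((n : ℤ) - 1) := by
  cases n with
  | zero =>
    rw [ofPS_coeff_neg _ _ (by norm_num)]
    simp [coeff_zero_eq_constantCoeff, map_mul]
  | succ m =>
    rw [coeff_succ_X_mul]
    have e : ((m + 1 : ℕ) : ℤ) - 1 = (m : ℤ) := by push_cast; ring
    rw [e, ofPS_coeff_nat]
/-- let `f = 1/t + r₁ + f₁t + ⋯` be a Laurent series over ℂ with
`f′ = −f² + 2r₁·f + c`, and set `d = c + r₁²`. If `d ≠ 0` then `t·f(t) = D_{s,r₁}(t)`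
for any square root `s` of `d`; if `d = 0` then `t·f(t) = 1 + r₁t`. -/
theorem riccati_solution (f : LaurentSeries ℂ) (r₁ c : ℂ)
    (hf₁ : f.coeff (-1) = 1) (hf₂ : ∀ k : ℤ, k < -1 → f.coeff k = 0)
    (hr₁ : f.coeff 0 = r₁)
    (hric : lderiv f
      = -(f ^ 2) + (HahnSeries.C (2 * r₁) : LaurentSeries ℂ) * f
        + (HahnSeries.C c : LaurentSeries ℂ)) :
    (c + r₁ ^ 2 ≠ 0 → ∀ s : ℂ, s ^ 2 = c + r₁ ^ 2 → ∀ D : PowerSeries ℂ, IsDab s r₁ D →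
        HahnSeries.single (1 : ℤ) (1 : ℂ) * f = HahnSeries.ofPowerSeries ℤ ℂ D) ∧
    (c + r₁ ^ 2 = 0 →
        HahnSeries.single (1 : ℤ) (1 : ℂ) * f
          = HahnSeries.ofPowerSeries ℤ ℂ (1 + PowerSeries.C (R := ℂ) r₁ * PowerSeries.X)) := by
  classical
  obtain ⟨g, hgco⟩ : ∃ g : ℂ⟦X⟧, ∀ n : ℕ, coeff n g = f.coeff ((n : ℤ) - 1) :=
    ⟨PowerSeries.mk fun n => f.coeff ((n : ℤ) - 1), fun n => PowerSeries.coeff_mk n _⟩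
  have hA : HahnSeries.single (1 : ℤ) (1 : ℂ) * f = HahnSeries.ofPowerSeries ℤ ℂ g := by
    ext k
    have hL : (HahnSeries.single (1 : ℤ) (1 : ℂ) * f).coeff k = f.coeff (k - 1) := by
      have h := HahnSeries.coeff_single_mul_add (r := (1 : ℂ)) (x := f) (a := k - 1) (b := 1)
      rw [one_mul, sub_add_cancel] at h
      exact h
    rw [hL]
    by_cases hk : 0 ≤ k
    · lift k to ℕ using hk with n
      rw [ofPS_coeff_nat, hgco]
    · push_neg at hk
      rw [hf₂ _ (by omega), ofPS_coeff_neg _ _ (by omega)]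
  have hfc : ∀ m : ℤ, f.coeff m = ((HahnSeries.ofPowerSeries ℤ ℂ) g).coeff (m + 1) := by
    intro m
    rw [← hA]
    have h := HahnSeries.coeff_single_mul_add (r := (1 : ℂ)) (x := f) (a := m) (b := 1)
    rw [one_mul] at h
    exact h.symm
  have hf2c : ∀ m : ℤ, (f ^ 2).coeff m
      = ((HahnSeries.ofPowerSeries ℤ ℂ) (g ^ 2)).coeff (m + 2) := by
    have h12 : (HahnSeries.single (1 : ℤ) (1 : ℂ)) * HahnSeries.single (1 : ℤ) (1 : ℂ)
        = HahnSeries.single (2 : ℤ) (1 : ℂ) := by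
      rw [HahnSeries.single_mul_single]; norm_num
    have hsq : HahnSeries.single (2 : ℤ) (1 : ℂ) * f ^ 2
        = HahnSeries.ofPowerSeries ℤ ℂ (g ^ 2) := by
      calc HahnSeries.single (2 : ℤ) (1 : ℂ) * f ^ 2
          = (HahnSeries.single (1 : ℤ) (1 : ℂ) * f) * (HahnSeries.single (1 : ℤ) (1 : ℂ) * f) := by
            rw [← h12]; ring
        _ = HahnSeries.ofPowerSeries ℤ ℂ g * HahnSeries.ofPowerSeries ℤ ℂ g := by rw [hA]
        _ = HahnSeries.ofPowerSeries ℤ ℂ (g ^ 2) := by rw [sq, map_mul]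
    intro m
    rw [← hsq]
    have h := HahnSeries.coeff_single_mul_add (r := (1 : ℂ)) (x := f ^ 2) (a := m) (b := 2)
    rw [one_mul] at h
    exact h.symm
  have hg0 : coeff 0 g = 1 := by
    rw [hgco 0]
    norm_num
    exact hf₁
  have Eg : X * d⁄dX ℂ g - g = C (2 * r₁) * X * g + C c * X ^ 2 - g ^ 2 := by
    ext n
    have H := congrFun (congrArg HahnSeries.coeff hric) ((n : ℤ) - 2)
    have hld : (lderiv f).coeff ((n : ℤ) - 2)
        = ((((n : ℤ) - 1) : ℤ) : ℂ) * f.coeff ((n : ℤ) - 1) := by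
      show ((((n : ℤ) - 2) + 1 : ℤ) : ℂ) * f.coeff (((n : ℤ) - 2) + 1) = _
      rw [show (n : ℤ) - 2 + 1 = (n : ℤ) - 1 by ring]
    have hCc : (HahnSeries.C c : LaurentSeries ℂ).coeff ((n : ℤ) - 2)
        = (if n = 2 then c else 0) := by
      by_cases h2 : n = 2
      · rw [if_pos h2, h2, HahnSeries.C_apply]
        norm_num [HahnSeries.coeff_single]
      · rw [if_neg h2, HahnSeries.C_apply, HahnSeries.coeff_single_of_ne (by omega)]
    rw [hld, HahnSeries.coeff_add, HahnSeries.coeff_add, HahnSeries.coeff_neg,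
      HahnSeries.C_apply, HahnSeries.coeff_single_zero_mul, hCc,
      hfc ((n : ℤ) - 2), hfc ((n : ℤ) - 1), hf2c ((n : ℤ) - 2),
      show (n : ℤ) - 1 + 1 = (n : ℤ) by ring,
      show (n : ℤ) - 2 + 2 = (n : ℤ) by ring,
      show (n : ℤ) - 2 + 1 = (n : ℤ) - 1 by ring,
      ofPS_coeff_nat, ofPS_coeff_nat] at H
    rw [map_sub, map_sub, map_add, coeff_X_mul_derivative,
      mul_assoc, coeff_C_mul, coeff_X_mul_ofPS, coeff_C_mul, coeff_X_pow]
    push_cast at H ⊢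
    by_cases h2 : n = 2
    · rw [if_pos h2] at H ⊢
      linear_combination H
    · rw [if_neg h2] at H ⊢
      linear_combination H
  constructor
  · intro hd s hs D hDab
    have hs0 : s ≠ 0 := by
      intro h
      apply hd
      rw [← hs, h]
      ring
    rcases hDab with ⟨-, hfun⟩ | ⟨h0, -⟩
    · obtain ⟨hD0, ED⟩ := isDab_riccati s r₁ hs0 D hfun
      have hcs : s ^ 2 - r₁ ^ 2 = c := by linear_combination hs
      rw [hcs] at ED
      rw [hA, riccati_unique r₁ c g D hg0 hD0 Eg ED]
    · exact absurd h0 hs0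
  · intro hd
    have hh0 : coeff 0 (1 + C r₁ * X) = 1 := by simp
    have Eh : X * d⁄dX ℂ (1 + C r₁ * X) - (1 + C r₁ * X)
        = C (2 * r₁) * X * (1 + C r₁ * X) + C c * X ^ 2 - (1 + C r₁ * X) ^ 2 := by
      have hd' : C c = -(C r₁ * C r₁) := by
        rw [← map_mul, ← map_neg]
        congr 1
        linear_combination hd
      have hder : d⁄dX ℂ (1 + C r₁ * X) = C r₁ := by
        rw [map_add, dmul, derivative_C, derivative_X]
        simp
      have hC2 : C (2 * r₁) = 2 * C r₁ := by rw [map_mul, map_ofNat]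
      rw [hder, hd', hC2]
      ring
    rw [hA, riccati_unique r₁ c g _ hg0 hh0 Eg Eh]
end RigidGenus
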